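/- Let N ≥ 1 and let f : ℝ^N → ℝ be a continuous function that is permutation-invariant, i.e., f(x ∘ σ) = f(x) for every x ∈ ℝ^N and every permutation σ of {1,…,N}. Then there exists a function ρ : ℝ^N → ℝ that is continuous on the range Z = {Ψ_N(x) : x ∈ ℝ^N} of the sum-of-power mapping, such that f(x) = ρ(Ψ_N(x)) for every x ∈ ℝ^N, where Ψ_N(x) = (Σ_{n=1}^N x_n, Σ_{n=1}^N x_n^2, …, Σ_{n=1}^N x_n^N). (DeepSets representation for one-dimensional set features with latent dimension L = N.) -/

import Mathlib

open MvPolynomial Finset in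
lemma my_esymm_congr (N : ℕ) (x y : Fin N → ℝ)
    (h : ∀ j, 1 ≤ j → j ≤ N → ∑ n, x n ^ j = ∑ n, y n ^ j) :
    ∀ k, k ≤ N → aeval x (esymm (Fin N) ℝ k) = aeval y (esymm (Fin N) ℝ k) := by
  have hpsum : ∀ (z : Fin N → ℝ) (j : ℕ), aeval z (psum (Fin N) ℝ j) = ∑ n, z n ^ j := by
    intro z j
    simp [psum]
  intro k
  induction k using Nat.strong_induction_on with
  | _ k ih =>
    intro hkN
    rcases Nat.eq_zero_or_pos k with rfl | hk
    · simp
    have hx := congrArg (aeval x) (MvPolynomial.mul_esymm_eq_sum (Fin N) ℝ k)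
    have hy := congrArg (aeval y) (MvPolynomial.mul_esymm_eq_sum (Fin N) ℝ k)
    simp only [map_mul, map_sum, map_pow, map_neg, map_one, map_natCast, hpsum] at hx hy
    have hsum : (∑ a ∈ antidiagonal k with a.1 < k,
          (-1 : ℝ) ^ a.1 * aeval x (esymm (Fin N) ℝ a.1) * (∑ n, x n ^ a.2))
        = ∑ a ∈ antidiagonal k with a.1 < k,
          (-1 : ℝ) ^ a.1 * aeval y (esymm (Fin N) ℝ a.1) * (∑ n, y n ^ a.2) := by
      refine Finset.sum_congr rfl ?_
      intro a ha
      rw [Finset.mem_filter, Finset.HasAntidiagonal.mem_antidiagonal] at ha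
      have h1 : a.1 < k := ha.2
      have h2 : 1 ≤ a.2 := by omega
      have h3 : a.2 ≤ N := by omega
      rw [ih a.1 h1 (by omega), h a.2 h2 h3]
    rw [hsum, ← hy] at hx
    exact mul_left_cancel₀ (by exact_mod_cast hk.ne') hx

lemma my_multiset_eq (N : ℕ) (x y : Fin N → ℝ)
    (h : ∀ j, 1 ≤ j → j ≤ N → ∑ n, x n ^ j = ∑ n, y n ^ j) :
    ((List.ofFn x : List ℝ) : Multiset ℝ) = ((List.ofFn y : List ℝ) : Multiset ℝ) := by
  have hE : ∀ k ≤ N, ((List.ofFn x : List ℝ) : Multiset ℝ).esymm k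
      = ((List.ofFn y : List ℝ) : Multiset ℝ).esymm k := by
    intro k hk
    have := my_esymm_congr N x y h k hk
    rwa [MvPolynomial.aeval_esymm_eq_multiset_esymm, MvPolynomial.aeval_esymm_eq_multiset_esymm,
      Fin.univ_val_map, Fin.univ_val_map] at this
  have hcx : Multiset.card ((List.ofFn x : List ℝ) : Multiset ℝ) = N := by simp
  have hcy : Multiset.card ((List.ofFn y : List ℝ) : Multiset ℝ) = N := by simp
  have hprod : (((List.ofFn x : List ℝ) : Multiset ℝ).map
        fun t => Polynomial.X - Polynomial.C t).prod
      = (((List.ofFn y : List ℝ) : Multiset ℝ).map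
        fun t => Polynomial.X - Polynomial.C t).prod := by
    rw [Multiset.prod_X_sub_X_eq_sum_esymm, Multiset.prod_X_sub_X_eq_sum_esymm, hcx, hcy]
    refine Finset.sum_congr rfl fun j hj => ?_
    rw [hE j (Finset.mem_range_succ_iff.mp hj)]
  have := congrArg Polynomial.roots hprod
  rwa [Polynomial.roots_multiset_prod_X_sub_C, Polynomial.roots_multiset_prod_X_sub_C] at this

lemma my_exists_perm (N : ℕ) (x y : Fin N → ℝ)
    (hm : ((List.ofFn x : List ℝ) : Multiset ℝ) = ((List.ofFn y : List ℝ) : Multiset ℝ)) :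
    ∃ σ : Equiv.Perm (Fin N), x ∘ σ = y := by
  have hperm : List.Perm (List.ofFn x) (List.ofFn y) := Multiset.coe_eq_coe.mp hm
  have h1 : List.Perm (List.ofFn (x ∘ Tuple.sort x)) (List.ofFn (y ∘ Tuple.sort y)) :=
    ((Equiv.Perm.ofFn_comp_perm _ x).trans hperm).trans
      (Equiv.Perm.ofFn_comp_perm _ y).symm
  have h2 : List.ofFn (x ∘ Tuple.sort x) = List.ofFn (y ∘ Tuple.sort y) :=
    List.Perm.eq_of_sortedLE ((Tuple.monotone_sort x).sortedLE_ofFn)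
      ((Tuple.monotone_sort y).sortedLE_ofFn) h1
  have h3 : x ∘ Tuple.sort x = y ∘ Tuple.sort y := List.ofFn_injective h2
  refine ⟨(Tuple.sort y).symm.trans (Tuple.sort x), funext fun i => ?_⟩
  have := congrFun h3 ((Tuple.sort y).symm i)
  simpa using this

noncomputable def myPsi (N : ℕ) : (Fin N → ℝ) → (Fin N → ℝ) :=
  fun x => fun k : Fin N => ∑ n, x n ^ ((k : ℕ) + 1)

lemma myPsi_cont (N : ℕ) : Continuous (myPsi N) :=
  continuous_pi fun _ => continuous_finset_sum _ fun n _ => (continuous_apply n).pow _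

lemma my_fac (N : ℕ) (f : (Fin N → ℝ) → ℝ)
    (hinv : ∀ (σ : Equiv.Perm (Fin N)) (x : Fin N → ℝ), f (x ∘ σ) = f x)
    (x y : Fin N → ℝ) (h : myPsi N x = myPsi N y) : f x = f y := by
  have hj : ∀ j, 1 ≤ j → j ≤ N → ∑ n, x n ^ j = ∑ n, y n ^ j := by
    intro j h1 h2
    have := congrFun h ⟨j - 1, by omega⟩
    simpa [myPsi, Nat.sub_add_cancel h1] using this
  obtain ⟨σ, hσ⟩ := my_exists_perm N x y (my_multiset_eq N x y hj)
  rw [← hσ, hinv]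

lemma my_bound (N : ℕ) (hN : 1 ≤ N) (z : Fin N → ℝ) (R : ℝ) (hR : ‖myPsi N z‖ ≤ R) :
    ‖z‖ ≤ max R (Real.sqrt R) := by
  have hR0 : 0 ≤ R := le_trans (norm_nonneg _) hR
  rcases lt_or_ge N 2 with h2 | h2
  · have hN1 : N = 1 := by omega
    subst hN1
    refine le_trans ?_ (le_max_left _ _)
    rw [pi_norm_le_iff_of_nonneg hR0]
    intro i
    have h0 : myPsi 1 z 0 = z 0 := by simp [myPsi]
    have h1 : ‖myPsi 1 z 0‖ ≤ ‖myPsi 1 z‖ := norm_le_pi_norm _ 0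
    rw [h0] at h1
    have : i = 0 := Subsingleton.elim i 0
    rw [this]
    exact h1.trans hR
  · refine le_trans ?_ (le_max_right _ _)
    rw [pi_norm_le_iff_of_nonneg (Real.sqrt_nonneg R)]
    intro i
    set k1 : Fin N := ⟨1, by omega⟩
    have hk : myPsi N z k1 = ∑ n, z n ^ 2 := by simp [myPsi, k1]
    have hsq : z i ^ 2 ≤ ∑ n, z n ^ 2 :=
      Finset.single_le_sum (fun n _ => sq_nonneg (z n)) (Finset.mem_univ i)
    have hle : ∑ n, z n ^ 2 ≤ R := by
      have h1 : ‖myPsi N z k1‖ ≤ ‖myPsi N z‖ := norm_le_pi_norm _ k1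
      rw [hk] at h1
      exact (le_abs_self _).trans (h1.trans hR)
    have : z i ^ 2 ≤ R := hsq.trans hle
    calc ‖z i‖ = Real.sqrt (z i ^ 2) := by rw [Real.sqrt_sq_eq_abs]; rfl
    _ ≤ Real.sqrt R := Real.sqrt_le_sqrt this

lemma my_key (N : ℕ) (hN : 1 ≤ N) (f : (Fin N → ℝ) → ℝ) (hf : Continuous f)
    (hinv : ∀ (σ : Equiv.Perm (Fin N)) (x : Fin N → ℝ), f (x ∘ σ) = f x)
    (x₀ : Fin N → ℝ) (z : ℕ → Fin N → ℝ)
    (hz : Filter.Tendsto (fun m => myPsi N (z m)) Filter.atTop (nhds (myPsi N x₀))) :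
    Filter.Tendsto (fun m => f (z m)) Filter.atTop (nhds (f x₀)) := by
  apply Filter.tendsto_of_subseq_tendsto
  intro ns hns
  have hz' : Filter.Tendsto (fun m => myPsi N (z (ns m))) Filter.atTop (nhds (myPsi N x₀)) :=
    hz.comp hns
  obtain ⟨R, hR⟩ := hz'.isCompact_insert_range.isBounded.subset_closedBall 0
  have hball : ∀ m, z (ns m) ∈ Metric.closedBall (0 : Fin N → ℝ) (max R (Real.sqrt R)) := by
    intro m
    rw [Metric.mem_closedBall, dist_zero_right]
    refine my_bound N hN _ R ?_
    have : myPsi N (z (ns m)) ∈ Metric.closedBall (0 : Fin N → ℝ) R :=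
      hR (Set.mem_insert_of_mem _ (Set.mem_range_self m))
    rwa [Metric.mem_closedBall, dist_zero_right] at this
  obtain ⟨w, -, φ, hφ, hwtend⟩ :=
    (isCompact_closedBall (0 : Fin N → ℝ) (max R (Real.sqrt R))).tendsto_subseq hball
  have hΨw : myPsi N w = myPsi N x₀ := by
    refine tendsto_nhds_unique (((myPsi_cont N).tendsto w).comp hwtend) ?_
    exact hz'.comp hφ.tendsto_atTop
  refine ⟨φ, ?_⟩
  have : f x₀ = f w := (my_fac N f hinv w x₀ hΨw).symm
  rw [this]
  exact ((hf.tendsto w).comp hwtend)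

/-- DeepSets representation for one-dimensional set features with latent
dimension `L = N`: every continuous permutation-invariant `f : ℝ^N → ℝ`
factors as `ρ ∘ Ψ_N` where `Ψ_N` is the sum-of-power mapping and `ρ` is
continuous on the range of `Ψ_N`. -/
theorem deepsets_one_dimensional (N : ℕ) (hN : 1 ≤ N)
    (f : (Fin N → ℝ) → ℝ) (hf : Continuous f)
    (hinv : ∀ (σ : Equiv.Perm (Fin N)) (x : Fin N → ℝ), f (x ∘ σ) = f x) :
    ∃ ρ : (Fin N → ℝ) → ℝ,
      ContinuousOn ρ
        (Set.range (fun x : Fin N → ℝ => fun k : Fin N => ∑ n, x n ^ ((k : ℕ) + 1))) ∧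
      ∀ x : Fin N → ℝ, f x = ρ (fun k : Fin N => ∑ n, x n ^ ((k : ℕ) + 1)) := by
  classical
  have hrange : (Set.range (fun x : Fin N → ℝ => fun k : Fin N => ∑ n, x n ^ ((k : ℕ) + 1)))
      = Set.range (myPsi N) := rfl
  refine ⟨fun y => if h : y ∈ Set.range (myPsi N) then f h.choose else 0, ?_, ?_⟩
  · rw [hrange]
    intro y₀ hy₀
    obtain ⟨x₀, hx₀⟩ := hy₀
    subst hx₀
    have hρ : (if h : myPsi N x₀ ∈ Set.range (myPsi N) then f h.choose else 0) = f x₀ := by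
      rw [dif_pos ⟨x₀, rfl⟩]
      exact my_fac N f hinv _ x₀ (⟨x₀, rfl⟩ : myPsi N x₀ ∈ Set.range (myPsi N)).choose_spec
    unfold ContinuousWithinAt
    rw [show (fun y => if h : y ∈ Set.range (myPsi N) then f h.choose else 0) (myPsi N x₀) = f x₀
      from hρ]
    apply Filter.tendsto_of_subseq_tendsto
    intro ns hns
    have hmem : ∀ᶠ m in Filter.atTop, ns m ∈ Set.range (myPsi N) :=
      hns.eventually eventually_mem_nhdsWithin
    obtain ⟨m₀, hm₀⟩ := Filter.eventually_atTop.mp hmem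
    set z : ℕ → Fin N → ℝ := fun m =>
      if h : ns (m + m₀) ∈ Set.range (myPsi N) then h.choose else x₀ with hz
    have hzspec : ∀ m, myPsi N (z m) = ns (m + m₀) := by
      intro m
      have h : ns (m + m₀) ∈ Set.range (myPsi N) := hm₀ _ (by omega)
      simp only [hz, dif_pos h]
      exact h.choose_spec
    have htend : Filter.Tendsto (fun m => myPsi N (z m)) Filter.atTop (nhds (myPsi N x₀)) := by
      simp only [hzspec]
      exact (hns.comp (Filter.tendsto_add_atTop_nat m₀)).mono_right nhdsWithin_le_nhds
    have hkey := my_key N hN f hf hinv x₀ z htend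
    refine ⟨fun m => m + m₀, ?_⟩
    refine hkey.congr fun m => ?_
    have h : ns (m + m₀) ∈ Set.range (myPsi N) := hm₀ _ (by omega)
    simp only [dif_pos h, hz]
  · intro x
    have hx : myPsi N x ∈ Set.range (myPsi N) := ⟨x, rfl⟩
    show f x = if h : myPsi N x ∈ Set.range (myPsi N) then f h.choose else 0
    rw [dif_pos hx]
    exact (my_fac N f hinv _ x hx.choose_spec).symm
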